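/- Let s, u ∈ ℂ with s ≠ 0, let A = [[s, 1], [0, s⁻¹]], B = [[s, 0], [−u, s⁻¹]] in SL₂(ℂ), W = B·A⁻¹·B⁻¹·A, W' = A·B⁻¹·A⁻¹·B, and z = 2 + (2 − s² − s⁻²)u + u². Then for every integer n, the trace of (W')^n · W^n equals 2 + u²·(s² + s⁻² + 2)·(s² + s⁻² − 2 − u)·S_{n−1}(z)². -/

import Mathlib

open Matrix

private lemma CH2 (a b c d : ℂ) : !![a, b; c, d] * !![a, b; c, d] =
    (a + d) • !![a, b; c, d] - (a * d - b * c) • 1 := by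
  ext i j
  fin_cases i <;> fin_cases j <;>
    simp [Matrix.mul_apply, Fin.sum_univ_two, Matrix.one_apply, smul_eq_mul] <;> ring

set_option maxHeartbeats 1000000

/-- Let `s, u ∈ ℂ` with `s ≠ 0`, let `A = !![s, 1; 0, s⁻¹]`, `B = !![s, 0; -u, s⁻¹]`,
`W = B * A⁻¹ * B⁻¹ * A`, `W' = A * B⁻¹ * A⁻¹ * B`, and `z = 2 + (2 - s² - s⁻²)u + u²`.
Then for every integer `n`, the trace of `(W')^n * W^n` (the matrix of the canonical
longitude of the twist knot `J(2,2n)`) equals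
`2 + u²(s² + s⁻² + 2)(s² + s⁻² - 2 - u) * S (n-1)²`, where `S` denotes the Chebyshev
polynomials of the second kind evaluated at `z`. -/
theorem trace_longitude_twist_knot (s u z : ℂ) (hs : s ≠ 0)
    (hz : z = 2 + (2 - s ^ 2 - s⁻¹ ^ 2) * u + u ^ 2)
    (S : ℤ → ℂ) (hS0 : S 0 = 1) (hS1 : S 1 = z)
    (hSrec : ∀ k : ℤ, S k = z * S (k - 1) - S (k - 2))
    (A B W W' : Matrix (Fin 2) (Fin 2) ℂ)
    (hA : A = !![s, 1; 0, s⁻¹]) (hB : B = !![s, 0; -u, s⁻¹])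
    (hW : W = B * A⁻¹ * B⁻¹ * A) (hW' : W' = A * B⁻¹ * A⁻¹ * B) :
    ∀ n : ℤ, (W' ^ n * W ^ n).trace =
      2 + u ^ 2 * (s ^ 2 + s⁻¹ ^ 2 + 2) * (s ^ 2 + s⁻¹ ^ 2 - 2 - u) *
        (S (n - 1)) ^ 2 := by
  have hAi : A⁻¹ = !![s⁻¹, -1; 0, s] := by
    apply inv_eq_right_inv
    rw [hA]
    ext i j
    fin_cases i <;> fin_cases j <;>
      simp [Matrix.mul_apply, Fin.sum_univ_two] <;> field_simp
  have hBi : B⁻¹ = !![s⁻¹, 0; u, s] := by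
    apply inv_eq_right_inv
    rw [hB]
    ext i j
    fin_cases i <;> fin_cases j <;>
      simp [Matrix.mul_apply, Fin.sum_univ_two] <;> field_simp <;> ring
  have hWe : W = !![1 - s ^ 2 * u, s⁻¹ - s * u - s;
      (u ^ 2 + u - u * s⁻¹ ^ 2) * s, u ^ 2 + 2 * u - u * s⁻¹ ^ 2 + 1] := by
    rw [hW, hAi, hBi, hA, hB]
    ext i j
    fin_cases i <;> fin_cases j <;>
      simp [Matrix.mul_apply, Fin.sum_univ_two] <;> field_simp <;>
        first | ring1 | (left; ring1) | tauto
  have hW'e : W' = !![1 + 2 * u + u ^ 2 - s ^ 2 * u, s - s⁻¹ - s⁻¹ * u;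
      s⁻¹ * u - s * u + s⁻¹ * u ^ 2, 1 - s⁻¹ ^ 2 * u] := by
    rw [hW', hAi, hBi, hA, hB]
    ext i j
    fin_cases i <;> fin_cases j <;>
      simp [Matrix.mul_apply, Fin.sum_univ_two] <;> field_simp <;>
        first | ring1 | (left; ring1) | tauto
  have htrW : W.trace = z := by
    rw [hWe, Matrix.trace_fin_two_of, hz]; ring
  have htrW' : W'.trace = z := by
    rw [hW'e, Matrix.trace_fin_two_of, hz]; ring
  have hCHW : W * W = z • W - 1 := by
    rw [hWe, CH2,
      show (1 - s ^ 2 * u) + (u ^ 2 + 2 * u - u * s⁻¹ ^ 2 + 1) = z by rw [hz]; ring,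
      show (1 - s ^ 2 * u) * (u ^ 2 + 2 * u - u * s⁻¹ ^ 2 + 1) -
        (s⁻¹ - s * u - s) * ((u ^ 2 + u - u * s⁻¹ ^ 2) * s) = 1 by field_simp; ring,
      one_smul]
  have hCHW' : W' * W' = z • W' - 1 := by
    rw [hW'e, CH2,
      show (1 + 2 * u + u ^ 2 - s ^ 2 * u) + (1 - s⁻¹ ^ 2 * u) = z by rw [hz]; ring,
      show (1 + 2 * u + u ^ 2 - s ^ 2 * u) * (1 - s⁻¹ ^ 2 * u) -
        (s - s⁻¹ - s⁻¹ * u) * (s⁻¹ * u - s * u + s⁻¹ * u ^ 2) = 1 by field_simp; ring,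
      one_smul]
  have hdetW : W.det = 1 := by
    rw [hWe, Matrix.det_fin_two_of]; field_simp; ring
  have hdetW' : W'.det = 1 := by
    rw [hW'e, Matrix.det_fin_two_of]; field_simp; ring
  have hT : (W' * W).trace =
      2 + u ^ 2 * (s ^ 2 + s⁻¹ ^ 2 + 2) * (s ^ 2 + s⁻¹ ^ 2 - 2 - u) := by
    rw [hW'e, hWe]
    have h9 : s ^ 9 * s⁻¹ ^ 9 = 1 := by field_simp
    rw [Matrix.mul_fin_two, Matrix.trace_fin_two_of]
    field_simp
    linear_combination
  have hSm1 : S (-1) = 0 := by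
    have h := hSrec 1
    rw [show (1 : ℤ) - 1 = 0 by ring, show (1 : ℤ) - 2 = -1 by ring, hS0, hS1] at h
    linear_combination h
  have hSm2 : S (-2) = -1 := by
    have h := hSrec 0
    rw [show (0 : ℤ) - 1 = -1 by ring, show (0 : ℤ) - 2 = -2 by ring, hS0, hSm1] at h
    linear_combination h
  have key : ∀ M : Matrix (Fin 2) (Fin 2) ℂ, M * M = z • M - 1 → M.det = 1 →
      ∀ n : ℤ, M ^ n = S (n - 1) • M - S (n - 2) • 1 := by
    intro M hCH hdet
    have hu : IsUnit M.det := hdet ▸ isUnit_one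
    have hMinv : M⁻¹ = z • 1 - M := by
      apply inv_eq_right_inv
      rw [Matrix.mul_sub, Matrix.mul_smul, Matrix.mul_one, hCH]
      abel
    intro n
    induction n using Int.induction_on with
    | zero =>
      rw [show (0 : ℤ) - 1 = -1 by ring, show (0 : ℤ) - 2 = -2 by ring, hSm1, hSm2]
      simp
    | succ n ih =>
      rw [Matrix.zpow_add_one hu, ih,
        show ((n : ℤ) + 1) - 1 = (n : ℤ) by ring,
        show ((n : ℤ) + 1) - 2 = (n : ℤ) - 1 by ring,
        Matrix.sub_mul]
      simp only [smul_mul_assoc, mul_smul_comm, Matrix.one_mul, Matrix.mul_one]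
      rw [hCH, hSrec n]
      module
    | pred n ih =>
      rw [show (-(n : ℤ) - 1) = (-(n : ℤ)) - 1 by ring, Matrix.zpow_sub_one hu, ih, hMinv,
        show (-(n : ℤ) - 1) - 1 = -(n : ℤ) - 2 by ring,
        show (-(n : ℤ) - 1) - 2 = -(n : ℤ) - 3 by ring]
      have h := hSrec (-(n : ℤ) - 1)
      rw [show (-(n : ℤ) - 1) - 1 = -(n : ℤ) - 2 by ring,
        show (-(n : ℤ) - 1) - 2 = -(n : ℤ) - 3 by ring] at h
      simp only [Matrix.sub_mul, Matrix.mul_sub, smul_mul_assoc, mul_smul_comm,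
        Matrix.one_mul, Matrix.mul_one, smul_smul]
      rw [hCH, h]
      module
  have E : ∀ n : ℤ, S (n - 1) ^ 2 - z * S (n - 1) * S (n - 2) + S (n - 2) ^ 2 = 1 := by
    intro n
    induction n using Int.induction_on with
    | zero =>
      rw [show (0 : ℤ) - 1 = -1 by ring, show (0 : ℤ) - 2 = -2 by ring, hSm1, hSm2]
      ring
    | succ n ih =>
      have h := hSrec n
      rw [show ((n : ℤ) + 1) - 1 = (n : ℤ) by ring,
        show ((n : ℤ) + 1) - 2 = (n : ℤ) - 1 by ring]
      linear_combination (S (n : ℤ) - S ((n : ℤ) - 2)) * h + ih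
    | pred n ih =>
      have h := hSrec (-(n : ℤ) - 1)
      rw [show (-(n : ℤ) - 1) - 1 = -(n : ℤ) - 2 by ring,
        show (-(n : ℤ) - 1) - 2 = -(n : ℤ) - 3 by ring] at h
      rw [show (-(n : ℤ) - 1) - 1 = -(n : ℤ) - 2 by ring,
        show (-(n : ℤ) - 1) - 2 = -(n : ℤ) - 3 by ring]
      linear_combination (S (-(n : ℤ) - 3) - S (-(n : ℤ) - 1)) * h + ih
  intro n
  rw [key W hCHW hdetW n, key W' hCHW' hdetW' n]
  simp only [Matrix.sub_mul, Matrix.mul_sub, smul_mul_assoc, mul_smul_comm,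
    Matrix.one_mul, Matrix.mul_one, smul_smul, trace_sub, trace_smul]
  rw [hT, htrW, htrW']
  have h1 : (1 : Matrix (Fin 2) (Fin 2) ℂ).trace = 2 := by
    simp [Matrix.trace_one]
  rw [h1]
  simp only [smul_eq_mul]
  linear_combination 2 * E n
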